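/- Independence from disconnected users: if user j has no directed path to or from user i in the trust graph (in the undirected sense of connectivity of the trust relation), then removing j and all its incident edges does not change the satisfaction score of i. -/

import Mathlib

open Finset

/-- Independence from disconnected users: if j is not connected to i
(even in the undirected sense) in the trust graph, then the satisfaction score of i
in the network with j removed equals its score in the full network. -/
theorem stmt_16 (N : ℕ) (Nbr : Fin N → Finset (Fin N)) (R : Finset (Fin N))
    (r : Fin N → ℝ) (w : Fin N → Fin N → ℝ)
    (hr : ∀ a ∈ R, r a ∈ Set.Icc (0:ℝ) 1)
    (hw : ∀ a, a ∉ R → ∀ b ∈ Nbr a, 0 < w a b)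
    (hrow : ∀ a, a ∉ R → ∑ b ∈ Nbr a, w a b ≤ 1)
    (i j : Fin N) (hij : i ≠ j)
    (hdisc : ¬ Relation.ReflTransGen (fun a b => b ∈ Nbr a ∨ a ∈ Nbr b) i j)
    (s s' : Fin N → ℝ)
    -- s solves the full system
    (hsR : ∀ a ∈ R, s a = r a)
    (hsN : ∀ a, a ∉ R → s a = ∑ b ∈ Nbr a, w a b * s b)
    (hs0 : ∀ a, (¬ ∃ k ∈ R, Relation.ReflTransGen (fun x y => y ∈ Nbr x) a k) → s a = 0)
    -- s' solves the system on the graph with node j (and its incident edges) removed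
    (hs'R : ∀ a ∈ R, a ≠ j → s' a = r a)
    (hs'N : ∀ a, a ∉ R → a ≠ j → s' a = ∑ b ∈ (Nbr a).erase j, w a b * s' b)
    (hs'0 : ∀ a, a ≠ j →
      (¬ ∃ k ∈ R, k ≠ j ∧ Relation.ReflTransGen (fun x y => y ∈ (Nbr x).erase j) a k) →
      s' a = 0) :
    s' i = s i := by
  classical
  set rel : Fin N → Fin N → Prop := fun a b => b ∈ Nbr a ∨ a ∈ Nbr b with hrel
  set C : Set (Fin N) := {a | Relation.ReflTransGen rel i a} with hC
  have hiC : i ∈ C := Relation.ReflTransGen.refl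
  have hjC : j ∉ C := hdisc
  have hfwd : ∀ a ∈ C, ∀ b ∈ Nbr a, b ∈ C := fun a ha b hb => ha.tail (Or.inl hb)
  have hCj : ∀ a ∈ C, a ≠ j := by rintro a ha rfl; exact hjC ha
  have hnotj : ∀ a ∈ C, j ∉ Nbr a := fun a ha hj => hjC (hfwd a ha j hj)
  have herase : ∀ a ∈ C, (Nbr a).erase j = Nbr a :=
    fun a ha => Finset.erase_eq_of_notMem (hnotj a ha)
  have hfwdRTG : ∀ a ∈ C, ∀ b, Relation.ReflTransGen (fun x y => y ∈ Nbr x) a b → b ∈ C := by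
    intro a ha b hab
    induction hab with
    | refl => exact ha
    | tail h1 h2 ih => exact hfwd _ ih _ h2
  -- difference
  set d : Fin N → ℝ := fun a => s a - s' a with hd
  have key1 : ∀ a ∈ C, a ∈ R → d a = 0 := by
    intro a ha haR
    simp only [hd, hsR a haR, hs'R a haR (hCj a ha), sub_self]
  have key2 : ∀ a ∈ C, (¬ ∃ k ∈ R, Relation.ReflTransGen (fun x y => y ∈ Nbr x) a k) →
      d a = 0 := by
    intro a ha hnr
    have h1 : s a = 0 := hs0 a hnr
    have h2 : s' a = 0 := by
      refine hs'0 a (hCj a ha) ?_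
      rintro ⟨k, hkR, -, hk⟩
      exact hnr ⟨k, hkR, Relation.ReflTransGen.mono (fun x y hy => Finset.mem_of_mem_erase hy) _ _ hk⟩
    simp [hd, h1, h2]
  have key3 : ∀ a ∈ C, a ∉ R → d a = ∑ b ∈ Nbr a, w a b * d b := by
    intro a ha haR
    have h1 := hsN a haR
    have h2 := hs'N a haR (hCj a ha)
    rw [herase a ha] at h2
    simp only [hd, h1, h2, mul_sub, Finset.sum_sub_distrib]
  -- max principle
  set F : Finset (Fin N) := Finset.univ.filter (fun a => a ∈ C) with hF
  have hiF : i ∈ F := by simp [hF, hiC]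
  have hFne : F.Nonempty := ⟨i, hiF⟩
  set M : ℝ := F.sup' hFne (fun a => |d a|) with hM
  have hMle : ∀ a ∈ C, |d a| ≤ M := by
    intro a ha
    exact Finset.le_sup' (f := fun a => |d a|) (by simp [hF, ha])
  obtain ⟨a0, ha0F, ha0M⟩ := Finset.exists_mem_eq_sup' hFne (fun a => |d a|)
  have ha0C : a0 ∈ C := by simpa [hF] using ha0F
  have ha0M' : M = |d a0| := by rw [hM, ha0M]
  have hMnonneg : 0 ≤ M := ha0M' ▸ abs_nonneg _
  by_cases hMpos : M ≤ 0
  · have : |d i| = 0 := le_antisymm (le_trans (hMle i hiC) hMpos) (abs_nonneg _)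
    have := abs_eq_zero.mp this
    have : s i - s' i = 0 := this
    linarith
  push_neg at hMpos
  -- propagation: along forward paths from a0 the value |d| stays = M
  exfalso
  have prop : ∀ a, Relation.ReflTransGen (fun x y => y ∈ Nbr x) a0 a →
      |d a| = M ∧ a ∈ C := by
    intro a hab
    induction hab with
    | refl => exact ⟨ha0M'.symm, ha0C⟩
    | @tail b c h1 h2 ih =>
      obtain ⟨hbM, hbC⟩ := ih
      have hcC : c ∈ C := hfwd b hbC c h2
      refine ⟨?_, hcC⟩
      have hbR : b ∉ R := by
        intro hbR
        rw [key1 b hbC hbR] at hbM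
        simp at hbM; linarith
      have hbreach : ∃ k ∈ R, Relation.ReflTransGen (fun x y => y ∈ Nbr x) b k := by
        by_contra hnr
        rw [key2 b hbC hnr] at hbM
        simp at hbM; linarith
      have heq := key3 b hbC hbR
      have h4 : M ≤ ∑ x ∈ Nbr b, w b x * |d x| := by
        calc M = |d b| := hbM.symm
        _ = |∑ x ∈ Nbr b, w b x * d x| := by rw [heq]
        _ ≤ ∑ x ∈ Nbr b, |w b x * d x| := Finset.abs_sum_le_sum_abs _ _
        _ = ∑ x ∈ Nbr b, w b x * |d x| := by
            refine Finset.sum_congr rfl fun x hx => ?_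
            rw [abs_mul, abs_of_pos (hw b hbR x hx)]
      have h5 : ∑ x ∈ Nbr b, w b x * M ≤ M := by
        rw [← Finset.sum_mul]
        nlinarith [hrow b hbR]
      have h6 : ∑ x ∈ Nbr b, w b x * (M - |d x|) = 0 := by
        have hle : ∑ x ∈ Nbr b, w b x * (M - |d x|) ≤ 0 := by
          simp only [mul_sub, Finset.sum_sub_distrib]
          linarith
        have hge : 0 ≤ ∑ x ∈ Nbr b, w b x * (M - |d x|) := by
          refine Finset.sum_nonneg fun x hx => ?_
          have := hMle x (hfwd b hbC x hx)
          have := (hw b hbR x hx).le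
          nlinarith
        linarith
      have h7 := (Finset.sum_eq_zero_iff_of_nonneg
        (fun x hx => by
          have := hMle x (hfwd b hbC x hx)
          have := (hw b hbR x hx).le
          nlinarith)).mp h6 c h2
      have hwc := hw b hbR c h2
      have : M - |d c| = 0 := by
        rcases mul_eq_zero.mp h7 with h | h
        · exact absurd h (ne_of_gt hwc)
        · exact h
      linarith
  -- a0 must reach a rater
  have ha0R : a0 ∉ R := by
    intro h
    rw [key1 a0 ha0C h] at ha0M'
    simp at ha0M'; linarith
  have hreach : ∃ k ∈ R, Relation.ReflTransGen (fun x y => y ∈ Nbr x) a0 k := by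
    by_contra hnr
    rw [key2 a0 ha0C hnr] at ha0M'
    simp at ha0M'; linarith
  obtain ⟨k, hkR, hk⟩ := hreach
  obtain ⟨hkM, hkC⟩ := prop k hk
  rw [key1 k hkC hkR] at hkM
  simp at hkM; linarith
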